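/- At the unique Nash equilibrium of the load-side Cournot game with L ≥ 1 real loads of demands d_l > 0 and V ≥ 1 virtual bidders, with constants α^{RT} > α^{DA} > 0, β^{DA} ∈ ℝ, the aggregate participations over all players satisfy Σ_p d_p^{DA*} = (1 − α^{DA}/((L+V+1)·α^{RT}))·Σ_{l=1}^{L} d_l and Σ_p d_p^{RT*} = (α^{DA}/((L+V+1)·α^{RT}))·Σ_{l=1}^{L} d_l. Consequently, writing d := Σ_{l=1}^{L} d_l, one has d > Σ_p d_p^{DA*} > ((L+V)/(L+V+1))·d and (1/(L+V+1))·d > Σ_p d_p^{RT*} > 0; and as V → ∞ (with L, the d_l, α^{DA}, α^{RT}, β^{DA} fixed), the total day-ahead load converges to d and the price spread λ^{DA} − λ^{RT} = −(α^{DA}/(L+V+1))·d converges to 0. -/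

import Mathlib

/-- Expenditure of player `l` in the load-side Cournot game: given demands `dem`, a
profile `p` of day-ahead participations (real-time participation of `k` is
`dem k - p k`), prices are `λ^{DA} = α^{DA}·(∑ k, p k) + β^{DA}` and
`λ^{RT} = α^{RT}·(∑ k, dem k - p k) + λ^{DA}`, and the expenditure is
`λ^{DA}·p l + λ^{RT}·(dem l - p l)`. -/
noncomputable def expend {ι : Type*} [Fintype ι] (aDA aRT bDA : ℝ)
    (dem p : ι → ℝ) (l : ι) : ℝ :=
  (aDA * ∑ k, p k + bDA) * p l
    + (aRT * ∑ k, (dem k - p k) + (aDA * ∑ k, p k + bDA)) * (dem l - p l)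

/-- Nash equilibrium of the load-side Cournot game. -/
def IsNash {ι : Type*} [Fintype ι] [DecidableEq ι] (aDA aRT bDA : ℝ)
    (dem p : ι → ℝ) : Prop :=
  (∀ k, 0 ≤ p k) ∧
    ∀ l : ι, ∀ y : ℝ, 0 ≤ y →
      expend aDA aRT bDA dem p l ≤ expend aDA aRT bDA dem (Function.update p l y) l


lemma quad_kkt (a g x : ℝ) (ha : 0 < a) (hx : 0 ≤ x)
    (h : ∀ y : ℝ, 0 ≤ y → 0 ≤ a * (y - x)^2 + g * (y - x)) :
    0 ≤ g ∧ (0 < x → g = 0) := by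
  have hg : 0 ≤ g := by
    by_contra hg
    push_neg at hg
    set t := -g / (2 * a) with htdef
    have ht : 0 < t := div_pos (by linarith) (by linarith)
    have hta : a * t = -g / 2 := by
      rw [htdef, mul_div_assoc', div_eq_div_iff (by positivity) (by norm_num)]; ring
    have hkey := h (x + t) (by linarith)
    have : x + t - x = t := by ring
    rw [this] at hkey
    nlinarith
  refine ⟨hg, fun hxpos => ?_⟩
  by_contra hne
  have hgpos : 0 < g := lt_of_le_of_ne hg (Ne.symm hne)
  set ε := min x (g / (2 * a)) with hε
  have hεpos : 0 < ε := lt_min hxpos (by positivity)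
  have hε1 : ε ≤ x := min_le_left _ _
  have hε2 : ε * (2 * a) ≤ g := (le_div_iff₀ (by positivity)).mp (min_le_right _ _)
  have hkey := h (x - ε) (by linarith)
  have : x - ε - x = -ε := by ring
  rw [this] at hkey
  nlinarith

noncomputable def grad {ι : Type*} [Fintype ι] (aDA aRT : ℝ) (dem p : ι → ℝ) (l : ι) : ℝ :=
  aDA * p l + (aDA - aRT) * (dem l - p l) - aRT * (∑ k, (dem k - p k))

lemma expend_update {ι : Type*} [Fintype ι] [DecidableEq ι] (aDA aRT bDA : ℝ)
    (dem p : ι → ℝ) (l : ι) (y : ℝ) :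
    expend aDA aRT bDA dem (Function.update p l y) l
      = expend aDA aRT bDA dem p l + aRT * (y - p l)^2 + grad aDA aRT dem p l * (y - p l) := by
  have h1 : ∑ k, Function.update p l y k = ∑ k, p k + (y - p l) := by
    rw [Finset.sum_update_of_mem (Finset.mem_univ l)]
    rw [show (Finset.univ : Finset ι) \ {l} = Finset.univ.erase l from
      Finset.sdiff_singleton_eq_erase l Finset.univ]
    have := Finset.add_sum_erase Finset.univ p (Finset.mem_univ l)
    linarith
  have h2 : ∑ k, (dem k - Function.update p l y k) = (∑ k, (dem k - p k)) - (y - p l) := by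
    rw [Finset.sum_sub_distrib, Finset.sum_sub_distrib, h1]; ring
  simp only [expend, grad, h1, h2, Function.update_self]
  ring

/-- Aggregate participations and vanishing spread with virtual bidders.
With `L ≥ 1` real loads of demands `d_l > 0` (total `d = ∑_l d_l`), `V ≥ 1` virtual
bidders of demand `0`, and `α^{RT} > α^{DA} > 0`, `β^{DA} ∈ ℝ`, at the (unique) Nash
equilibrium: `∑_p d_p^{DA*} = (1 - α^{DA}/((L+V+1) α^{RT})) d`,
`∑_p d_p^{RT*} = (α^{DA}/((L+V+1) α^{RT})) d`, hence
`d > ∑_p d_p^{DA*} > ((L+V)/(L+V+1)) d` and `(1/(L+V+1)) d > ∑_p d_p^{RT*} > 0`, and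
the spread equals `λ^{DA} - λ^{RT} = -(α^{DA}/(L+V+1)) d`; as `V → ∞`, the total
day-ahead load converges to `d` and the spread converges to `0`. -/
theorem cournot_virtual_bidding_aggregate_and_limit
    (L : ℕ) (hL : 1 ≤ L)
    (aDA aRT bDA : ℝ) (h0 : 0 < aDA) (hlt : aDA < aRT)
    (dl : Fin L → ℝ) (hdl : ∀ k, 0 < dl k)
    (d : ℝ) (hd : d = ∑ l, dl l) :
    (∀ V : ℕ, 1 ≤ V →
      ∀ p : Fin L ⊕ Fin V → ℝ,
        IsNash aDA aRT bDA (Sum.elim dl (fun _ => (0 : ℝ))) p →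
        (∑ q, p q = (1 - aDA / (((L : ℝ) + (V : ℝ) + 1) * aRT)) * d) ∧
        (∑ q, (Sum.elim dl (fun _ => (0 : ℝ)) q - p q)
          = aDA / (((L : ℝ) + (V : ℝ) + 1) * aRT) * d) ∧
        d > ∑ q, p q ∧
        ∑ q, p q > ((L : ℝ) + (V : ℝ)) / ((L : ℝ) + (V : ℝ) + 1) * d ∧
        1 / ((L : ℝ) + (V : ℝ) + 1) * d
          > ∑ q, (Sum.elim dl (fun _ => (0 : ℝ)) q - p q) ∧
        0 < ∑ q, (Sum.elim dl (fun _ => (0 : ℝ)) q - p q) ∧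
        (aDA * (∑ q, p q) + bDA)
            - (aRT * (∑ q, (Sum.elim dl (fun _ => (0 : ℝ)) q - p q))
                + (aDA * (∑ q, p q) + bDA))
          = -(aDA / ((L : ℝ) + (V : ℝ) + 1)) * d) ∧
    Filter.Tendsto
      (fun V : ℕ => (1 - aDA / (((L : ℝ) + (V : ℝ) + 1) * aRT)) * d)
      Filter.atTop (nhds d) ∧
    Filter.Tendsto
      (fun V : ℕ => -(aDA / ((L : ℝ) + (V : ℝ) + 1)) * d)
      Filter.atTop (nhds 0) := by
  have hRT : 0 < aRT := h0.trans hlt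
  have hd0 : 0 < d := by
    rw [hd]
    exact Finset.sum_pos (fun i _ => hdl i) ⟨⟨0, hL⟩, Finset.mem_univ _⟩
  refine ⟨?_, ?_, ?_⟩
  · intro V hV p hNash
    set dem := Sum.elim dl (fun _ : Fin V => (0:ℝ)) with hdem
    have hkkt : ∀ q, 0 ≤ grad aDA aRT dem p q ∧ (0 < p q → grad aDA aRT dem p q = 0) := by
      intro q
      apply quad_kkt aRT _ (p q) hRT (hNash.1 q)
      intro y hy
      have h := hNash.2 q y hy
      rw [expend_update] at h
      linarith
    set R := ∑ q, (dem q - p q) with hRdef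
    set T := ∑ q, p q with hTdef
    have hDsum : ∑ q, dem q = d := by
      rw [hd, hdem, Fintype.sum_sum_type]
      simp
    have hTR : T + R = d := by
      rw [hRdef, Finset.sum_sub_distrib, ← hTdef, hDsum]
      ring
    have gradl : ∀ l : Fin L, grad aDA aRT dem p (Sum.inl l)
        = aDA * p (Sum.inl l) + (aDA - aRT) * (dl l - p (Sum.inl l)) - aRT * R := by
      intro l; rw [grad, ← hRdef]; simp [hdem]
    have gradv : ∀ v : Fin V, grad aDA aRT dem p (Sum.inr v)
        = aDA * p (Sum.inr v) + (aDA - aRT) * (0 - p (Sum.inr v)) - aRT * R := by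
      intro v; rw [grad, ← hRdef]; simp [hdem]
    have hRpos : 0 < R := by
      by_contra hR
      push_neg at hR
      have hload : ∀ l : Fin L, p (Sum.inl l) < dl l := by
        intro l
        rcases eq_or_lt_of_le (hNash.1 (Sum.inl l)) with hpz | hppos
        · rw [← hpz]; exact hdl l
        · have hzero := (hkkt (Sum.inl l)).2 hppos
          rw [gradl] at hzero
          nlinarith
      have hvirt : ∀ v : Fin V, p (Sum.inr v) ≤ 0 := by
        intro v
        by_contra hp
        push_neg at hp
        have hz := (hkkt (Sum.inr v)).2 hp
        rw [gradv] at hz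
        nlinarith
      have hTlt : T < d := by
        rw [hTdef, Fintype.sum_sum_type, hd]
        have h1 : ∑ l : Fin L, p (Sum.inl l) < ∑ l : Fin L, dl l :=
          Finset.sum_lt_sum_of_nonempty ⟨⟨0, hL⟩, Finset.mem_univ _⟩
            (fun i _ => hload i)
        have h2 : ∑ v : Fin V, p (Sum.inr v) ≤ 0 :=
          Finset.sum_nonpos (fun v _ => hvirt v)
        linarith
      linarith
    have hgz : ∀ q, grad aDA aRT dem p q = 0 := by
      intro q
      rcases eq_or_lt_of_le (hNash.1 q) with hpz | hppos
      · exfalso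
        have hge := (hkkt q).1
        cases q with
        | inl l => rw [gradl, ← hpz] at hge; nlinarith [hdl l]
        | inr v => rw [gradv, ← hpz] at hge; nlinarith
      · exact (hkkt q).2 hppos
    have hsumg : ∑ q, grad aDA aRT dem p q = 0 := by simp [hgz]
    have hE : aDA * T + (aDA - aRT) * R - ((L : ℝ) + (V : ℝ)) * (aRT * R) = 0 := by
      rw [← hsumg]
      simp only [grad, Finset.sum_sub_distrib, Finset.sum_add_distrib, ← Finset.mul_sum,
        Finset.sum_const, Finset.card_univ, Fintype.card_sum, Fintype.card_fin,
        nsmul_eq_mul, ← hTdef, ← hRdef]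
      push_cast
      ring
    have hn : (0:ℝ) < (L : ℝ) + (V : ℝ) + 1 := by positivity
    have hEq : ((L : ℝ) + (V : ℝ) + 1) * (aRT * R) = aDA * d := by
      linear_combination aDA * hTR - hE
    have hRval : R = aDA / (((L : ℝ) + (V : ℝ) + 1) * aRT) * d := by
      field_simp
      linear_combination hEq
    have h1 : aRT * (((L : ℝ) + (V : ℝ) + 1) * R) < aRT * d := by
      rw [show aRT * (((L : ℝ) + (V : ℝ) + 1) * R) = ((L : ℝ) + (V : ℝ) + 1) * (aRT * R)
        from by ring, hEq]
      exact mul_lt_mul_of_pos_right hlt hd0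
    have hnR : ((L : ℝ) + (V : ℝ) + 1) * R < d := lt_of_mul_lt_mul_left h1 hRT.le
    refine ⟨?_, hRval, ?_, ?_, ?_, hRpos, ?_⟩
    · have : T = d - R := by linarith
      rw [this, hRval]; ring
    · linarith
    · rw [gt_iff_lt, div_mul_eq_mul_div, div_lt_iff₀ hn]
      have : T = d - R := by linarith
      rw [this]
      nlinarith
    · rw [gt_iff_lt, show 1 / ((L : ℝ) + (V : ℝ) + 1) * d = d / ((L : ℝ) + (V : ℝ) + 1)
        from by ring, lt_div_iff₀ hn]
      nlinarith
    · have hs : aRT * R = aDA / ((L : ℝ) + (V : ℝ) + 1) * d := by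
        field_simp
        linear_combination hEq
      rw [show (aDA * T + bDA) - (aRT * R + (aDA * T + bDA)) = -(aRT * R) from by ring, hs]
      ring
  · have htop : Filter.Tendsto (fun V : ℕ => ((L : ℝ) + (V : ℝ) + 1) * aRT)
        Filter.atTop Filter.atTop := by
      apply Filter.Tendsto.atTop_mul_const hRT
      exact Filter.tendsto_atTop_add_const_right _ 1
        (Filter.tendsto_atTop_add_const_left _ (L : ℝ) tendsto_natCast_atTop_atTop)
    have h1 : Filter.Tendsto (fun V : ℕ => aDA / (((L : ℝ) + (V : ℝ) + 1) * aRT))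
        Filter.atTop (nhds 0) := by
      have := (htop.inv_tendsto_atTop).const_mul aDA
      simpa [div_eq_mul_inv] using this
    have := (Filter.Tendsto.const_sub (1:ℝ) h1).mul_const d
    simpa using this
  · have htop : Filter.Tendsto (fun V : ℕ => ((L : ℝ) + (V : ℝ) + 1))
        Filter.atTop Filter.atTop :=
      Filter.tendsto_atTop_add_const_right _ 1
        (Filter.tendsto_atTop_add_const_left _ (L : ℝ) tendsto_natCast_atTop_atTop)
    have h2 : Filter.Tendsto (fun V : ℕ => aDA / ((L : ℝ) + (V : ℝ) + 1))
        Filter.atTop (nhds 0) := by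
      have := (htop.inv_tendsto_atTop).const_mul aDA
      simpa [div_eq_mul_inv] using this
    have := h2.neg.mul_const d
    simpa using this
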